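/- Let p ∈ [1,∞), q with 1/p + 1/q = 1, and consider the family of continuous linear functionals on W_p^1([a,b],ℂ) given by B_ε(y) := α(ε) (y(t_ε) − y(t₀)), where t_ε ∈ [a,b], t_ε → t₀, and |α(ε)|·|t_ε − t₀|^{1/q} ≤ M for all small ε > 0. Then sup over small ε of the operator norms ‖B_ε‖ is finite, and B_ε(y) → 0 as ε → 0+ for every y ∈ W_p^1([a,b],ℂ). -/

import Mathlib

open Filter Topology MeasureTheory intervalIntegral

private lemma aux_meas {a b : ℝ} (y y' : ℝ → ℂ)
    (hderiv : ∀ s ∈ Set.Icc a b, HasDerivWithinAt y (y' s) (Set.Icc a b) s) :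
    AEStronglyMeasurable y' (volume.restrict (Set.Ioc a b)) := by
  have hg : StronglyMeasurable (fun s => derivWithin y (Set.Ici s) s) :=
    stronglyMeasurable_derivWithin_Ici y
  refine hg.aestronglyMeasurable.congr ?_
  have hb : ∀ᵐ s ∂(volume.restrict (Set.Ioc a b)), s ≠ b := by
    refine ae_restrict_of_ae ?_
    rw [ae_iff]
    have h : {s : ℝ | ¬ s ≠ b} = {b} := by ext s; simp
    rw [h]
    exact Real.volume_singleton
  filter_upwards [hb, ae_restrict_mem measurableSet_Ioc] with s hsb hs
  have hsb' : s < b := lt_of_le_of_ne hs.2 hsb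
  have h1 : HasDerivWithinAt y (y' s) (Set.Ici s) s := by
    have h2 : HasDerivWithinAt y (y' s) (Set.Ici s ∩ Set.Iio b) s := by
      refine (hderiv s ⟨hs.1.le, hs.2⟩).mono ?_
      intro u hu
      exact ⟨le_trans hs.1.le hu.1, hu.2.le⟩
    exact (hasDerivWithinAt_inter (Iio_mem_nhds hsb')).1 h2
  exact h1.derivWithin (uniqueDiffOn_Ici s s Set.self_mem_Ici)

private lemma aux_key {p : ℝ} (hp : 1 ≤ p) {a b : ℝ} (y y' : ℝ → ℂ)
    (hderiv : ∀ s ∈ Set.Icc a b, HasDerivWithinAt y (y' s) (Set.Icc a b) s)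
    (hint' : IntervalIntegrable (fun s => ‖y' s‖ ^ p) volume a b)
    {c d : ℝ} (hac : a ≤ c) (hcd : c ≤ d) (hdb : d ≤ b) :
    ‖y d - y c‖ ≤ (d - c) ^ (1 - 1/p) * (∫ s in c..d, ‖y' s‖ ^ p) ^ (1/p) := by
  have hab : a ≤ b := le_trans hac (le_trans hcd hdb)
  have hp0 : (0:ℝ) < p := lt_of_lt_of_le one_pos hp
  have hmeas : AEStronglyMeasurable y' (volume.restrict (Set.Ioc c d)) :=
    (aux_meas y y' hderiv).mono_measure
      (Measure.restrict_mono (Set.Ioc_subset_Ioc hac hdb) le_rfl)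
  have hintp_cd : IntegrableOn (fun s => ‖y' s‖ ^ p) (Set.Ioc c d) :=
    ((intervalIntegrable_iff_integrableOn_Ioc_of_le hab).1 hint').mono_set
      (Set.Ioc_subset_Ioc hac hdb)
  have hbound : ∀ s, ‖y' s‖ ≤ 1 + ‖y' s‖ ^ p := by
    intro s
    rcases le_total (‖y' s‖) 1 with h | h
    · exact le_add_of_le_of_nonneg h (Real.rpow_nonneg (norm_nonneg _) _)
    · calc ‖y' s‖ = ‖y' s‖ ^ (1:ℝ) := (Real.rpow_one _).symm
        _ ≤ ‖y' s‖ ^ p := Real.rpow_le_rpow_of_exponent_le h hp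
        _ ≤ 1 + ‖y' s‖ ^ p := le_add_of_nonneg_left one_pos.le
  have hfin : volume (Set.Ioc c d) < ⊤ := by
    rw [Real.volume_Ioc]; exact ENNReal.ofReal_lt_top
  have hconst : IntegrableOn (fun _ : ℝ => (1:ℝ)) (Set.Ioc c d) :=
    integrableOn_const hfin.ne
  have hy'int : IntegrableOn y' (Set.Ioc c d) := by
    refine Integrable.mono' (hconst.add hintp_cd) hmeas ?_
    exact Eventually.of_forall fun s => hbound s
  have hy'ii : IntervalIntegrable y' volume c d :=
    (intervalIntegrable_iff_integrableOn_Ioc_of_le hcd).2 hy'int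
  have hcont : ContinuousOn y (Set.Icc c d) := fun s hs =>
    ((hderiv s (Set.Icc_subset_Icc hac hdb hs)).continuousWithinAt).mono
      (Set.Icc_subset_Icc hac hdb)
  have hderiv' : ∀ x ∈ Set.Ioo c d, HasDerivWithinAt y (y' x) (Set.Ioi x) x := by
    intro x hx
    have hx' : x ∈ Set.Icc a b := ⟨le_trans hac hx.1.le, le_trans hx.2.le hdb⟩
    have h2 : HasDerivWithinAt y (y' x) (Set.Ioi x ∩ Set.Iio b) x := by
      refine (hderiv x hx').mono ?_
      intro u hu
      exact ⟨le_trans hx'.1 hu.1.le, hu.2.le⟩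
    exact (hasDerivWithinAt_inter (Iio_mem_nhds (lt_of_lt_of_le hx.2 hdb))).1 h2
  have hFTC : ∫ s in c..d, y' s = y d - y c :=
    integral_eq_sub_of_hasDeriv_right_of_le hcd hcont hderiv' hy'ii
  have hnorm : ‖y d - y c‖ ≤ ∫ s in c..d, ‖y' s‖ := by
    rw [← hFTC]
    exact intervalIntegral.norm_integral_le_integral_norm hcd
  rcases eq_or_lt_of_le hp with hp1 | hp1
  · subst hp1
    simpa [Real.rpow_one] using hnorm
  · have hpq : p.HolderConjugate (p/(p-1)) := Real.HolderConjugate.conjExponent hp1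
    set q := p/(p-1) with hq
    haveI : IsFiniteMeasure (volume.restrict (Set.Ioc c d)) := by
      constructor
      rw [Measure.restrict_apply_univ]
      exact hfin
    have h0 : ENNReal.ofReal p ≠ 0 := by
      simp [ENNReal.ofReal_eq_zero, not_le, hp0]
    have hfmem : MemLp y' (ENNReal.ofReal p) (volume.restrict (Set.Ioc c d)) := by
      rw [← memLp_norm_rpow_iff hmeas h0 ENNReal.ofReal_ne_top]
      rw [ENNReal.toReal_ofReal hp0.le, ENNReal.div_self h0 ENNReal.ofReal_ne_top]
      exact memLp_one_iff_integrable.2 hintp_cd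
    have hgmem : MemLp (fun _ : ℝ => (1:ℂ)) (ENNReal.ofReal q) (volume.restrict (Set.Ioc c d)) :=
      memLp_const 1
    have hHolder := integral_mul_norm_le_Lp_mul_Lq hpq hfmem hgmem
    simp only [norm_one, mul_one, Real.one_rpow] at hHolder
    have h2 : ∫ _ in Set.Ioc c d, (1:ℝ) = d - c := by
      simp [Real.volume_Ioc, ENNReal.toReal_ofReal (sub_nonneg.2 hcd), hcd]
    rw [h2] at hHolder
    have h1q : 1 - 1/p = 1/q := by
      have := hpq.one_sub_inv
      rw [one_div, one_div, this]
    rw [h1q]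
    refine le_trans hnorm ?_
    rw [intervalIntegral.integral_of_le hcd, intervalIntegral.integral_of_le hcd]
    calc ∫ s in Set.Ioc c d, ‖y' s‖
        ≤ (∫ s in Set.Ioc c d, ‖y' s‖ ^ p) ^ (1/p) * (d - c) ^ (1/q) := hHolder
      _ = (d - c) ^ (1/q) * (∫ s in Set.Ioc c d, ‖y' s‖ ^ p) ^ (1/p) := mul_comm _ _
/-- The family of functionals `B_ε(y) = α(ε)(y(t_ε) − y(t₀))` on `W_p^1([a,b],ℂ)`:
if `t_ε → t₀` and `‖α(ε)‖ |t_ε − t₀|^{1/q} ≤ M` (with `1/q = 1 − 1/p`), then the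
operator norms are uniformly bounded and `B_ε(y) → 0` for every `y ∈ W_p^1`.
Elements of `W_p^1` are encoded as pairs `(y, y')` with `y'` the derivative of `y`
on `[a,b]` and `‖y‖^p, ‖y'‖^p` integrable. -/
theorem stmt_14 (p : ℝ) (hp : 1 ≤ p) (a b : ℝ) (hab : a < b)
    (t₀ : ℝ) (ht₀ : t₀ ∈ Set.Icc a b) (t : ℝ → ℝ) (α : ℝ → ℂ)
    (htmem : ∀ᶠ ε in 𝓝[>] (0:ℝ), t ε ∈ Set.Icc a b)
    (htconv : Tendsto t (𝓝[>] (0:ℝ)) (𝓝 t₀))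
    (M : ℝ) (hM : ∀ᶠ ε in 𝓝[>] (0:ℝ), ‖α ε‖ * |t ε - t₀| ^ (1 - 1 / p) ≤ M) :
    (∃ K : ℝ, ∀ᶠ ε in 𝓝[>] (0:ℝ), ∀ y y' : ℝ → ℂ,
      (∀ s ∈ Set.Icc a b, HasDerivWithinAt y (y' s) (Set.Icc a b) s) →
      IntervalIntegrable (fun s => ‖y s‖ ^ p) volume a b →
      IntervalIntegrable (fun s => ‖y' s‖ ^ p) volume a b →
      ‖α ε * (y (t ε) - y t₀)‖ ≤
        K * ((∫ s in a..b, ‖y s‖ ^ p) + ∫ s in a..b, ‖y' s‖ ^ p) ^ (1 / p)) ∧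
    (∀ y y' : ℝ → ℂ,
      (∀ s ∈ Set.Icc a b, HasDerivWithinAt y (y' s) (Set.Icc a b) s) →
      IntervalIntegrable (fun s => ‖y s‖ ^ p) volume a b →
      IntervalIntegrable (fun s => ‖y' s‖ ^ p) volume a b →
      Tendsto (fun ε => α ε * (y (t ε) - y t₀)) (𝓝[>] (0:ℝ)) (𝓝 0)) := by
  have hp0 : (0:ℝ) < p := lt_of_lt_of_le one_pos hp
  have hab' : a ≤ b := hab.le
  have hnn : ∀ (y' : ℝ → ℂ) (u v : ℝ), u ≤ v → (0:ℝ) ≤ ∫ s in u..v, ‖y' s‖ ^ p :=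
    fun y' u v h => intervalIntegral.integral_nonneg h
      (fun s _ => Real.rpow_nonneg (norm_nonneg _) _)
  have hbound : ∀ᶠ ε in 𝓝[>] (0:ℝ), ∀ y y' : ℝ → ℂ,
      (∀ s ∈ Set.Icc a b, HasDerivWithinAt y (y' s) (Set.Icc a b) s) →
      IntervalIntegrable (fun s => ‖y' s‖ ^ p) volume a b →
      ‖α ε * (y (t ε) - y t₀)‖ ≤
        (max M 0) * (∫ s in (min (t ε) t₀)..(max (t ε) t₀), ‖y' s‖ ^ p) ^ (1/p) := by
    filter_upwards [htmem, hM] with ε htε hMε y y' hderiv hint'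
    have hac : a ≤ min (t ε) t₀ := le_min htε.1 ht₀.1
    have hcd : min (t ε) t₀ ≤ max (t ε) t₀ := min_le_max
    have hdb : max (t ε) t₀ ≤ b := max_le htε.2 ht₀.2
    have hkey := aux_key hp y y' hderiv hint' hac hcd hdb
    have hΔ : ‖y (t ε) - y t₀‖ = ‖y (max (t ε) t₀) - y (min (t ε) t₀)‖ := by
      rcases le_total (t ε) t₀ with h | h
      · rw [min_eq_left h, max_eq_right h, norm_sub_rev]
      · rw [min_eq_right h, max_eq_left h]
    have hdc : max (t ε) t₀ - min (t ε) t₀ = |t ε - t₀| := by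
      rw [max_sub_min_eq_abs, abs_sub_comm]
    have hL : (0:ℝ) ≤ (∫ s in (min (t ε) t₀)..(max (t ε) t₀), ‖y' s‖ ^ p) ^ (1/p) :=
      Real.rpow_nonneg (hnn y' _ _ hcd) _
    calc ‖α ε * (y (t ε) - y t₀)‖ = ‖α ε‖ * ‖y (t ε) - y t₀‖ := norm_mul _ _
      _ = ‖α ε‖ * ‖y (max (t ε) t₀) - y (min (t ε) t₀)‖ := by rw [hΔ]
      _ ≤ ‖α ε‖ * ((max (t ε) t₀ - min (t ε) t₀) ^ (1 - 1/p) *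
            (∫ s in (min (t ε) t₀)..(max (t ε) t₀), ‖y' s‖ ^ p) ^ (1/p)) :=
          mul_le_mul_of_nonneg_left hkey (norm_nonneg _)
      _ = (‖α ε‖ * |t ε - t₀| ^ (1 - 1/p)) *
            (∫ s in (min (t ε) t₀)..(max (t ε) t₀), ‖y' s‖ ^ p) ^ (1/p) := by
          rw [hdc]; ring
      _ ≤ (max M 0) * (∫ s in (min (t ε) t₀)..(max (t ε) t₀), ‖y' s‖ ^ p) ^ (1/p) :=
          mul_le_mul_of_nonneg_right (le_trans hMε (le_max_left _ _)) hL
  refine ⟨⟨max M 0, ?_⟩, ?_⟩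
  · filter_upwards [hbound, htmem] with ε hb htε y y' hderiv hyint hy'int
    refine le_trans (hb y y' hderiv hy'int) ?_
    refine mul_le_mul_of_nonneg_left ?_ (le_max_right M 0)
    have hac : a ≤ min (t ε) t₀ := le_min htε.1 ht₀.1
    have hcd : min (t ε) t₀ ≤ max (t ε) t₀ := min_le_max
    have hdb : max (t ε) t₀ ≤ b := max_le htε.2 ht₀.2
    refine Real.rpow_le_rpow (hnn y' _ _ hcd) ?_ (by positivity)
    have h1 : (∫ s in (min (t ε) t₀)..(max (t ε) t₀), ‖y' s‖ ^ p) ≤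
        ∫ s in a..b, ‖y' s‖ ^ p :=
      intervalIntegral.integral_mono_interval hac hcd hdb
        (Eventually.of_forall fun s => Real.rpow_nonneg (norm_nonneg _) _) hy'int
    have h2 : (0:ℝ) ≤ ∫ s in a..b, ‖y s‖ ^ p := hnn y a b hab'
    linarith
  · intro y y' hderiv hyint hy'int
    have hFcont : ContinuousOn (fun x => ∫ s in t₀..x, ‖y' s‖ ^ p) (Set.uIcc a b) :=
      intervalIntegral.continuousOn_primitive_interval' hy'int
        (by rw [Set.uIcc_of_le hab']; exact ht₀)
    have htt : Tendsto t (𝓝[>] (0:ℝ)) (𝓝[Set.uIcc a b] t₀) := by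
      rw [tendsto_nhdsWithin_iff]
      refine ⟨htconv, ?_⟩
      filter_upwards [htmem] with ε h
      rwa [Set.uIcc_of_le hab']
    have hFt : Tendsto (fun ε => ∫ s in t₀..t ε, ‖y' s‖ ^ p) (𝓝[>] (0:ℝ)) (𝓝 0) := by
      have h0 : (∫ s in t₀..t₀, ‖y' s‖ ^ p) = 0 := intervalIntegral.integral_same
      have hc : ContinuousWithinAt (fun x => ∫ s in t₀..x, ‖y' s‖ ^ p) (Set.uIcc a b) t₀ :=
        hFcont t₀ (by rw [Set.uIcc_of_le hab']; exact ht₀)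
      have := hc.tendsto.comp htt
      simpa [h0, Function.comp_def] using this
    have habs : ∀ᶠ ε in 𝓝[>] (0:ℝ),
        (∫ s in (min (t ε) t₀)..(max (t ε) t₀), ‖y' s‖ ^ p) =
          |∫ s in t₀..t ε, ‖y' s‖ ^ p| := by
      filter_upwards [htmem] with ε hmem
      rcases le_total t₀ (t ε) with h | h
      · rw [min_eq_right h, max_eq_left h, abs_of_nonneg (hnn y' _ _ h)]
      · have hle : (∫ s in t₀..t ε, ‖y' s‖ ^ p) ≤ 0 := by
          rw [intervalIntegral.integral_symm]
          exact neg_nonpos.2 (hnn y' _ _ h)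
        rw [min_eq_left h, max_eq_right h, intervalIntegral.integral_symm, abs_of_nonpos hle]
    have hG : Tendsto (fun ε => (max M 0) * |∫ s in t₀..t ε, ‖y' s‖ ^ p| ^ (1/p))
        (𝓝[>] (0:ℝ)) (𝓝 0) := by
      have h1 : Tendsto (fun ε => |∫ s in t₀..t ε, ‖y' s‖ ^ p|) (𝓝[>] (0:ℝ)) (𝓝 0) := by
        simpa using hFt.abs
      have hrc : ContinuousAt (fun x : ℝ => x ^ (1/p)) 0 :=
        Real.continuousAt_rpow_const 0 (1/p) (Or.inr (by positivity))
      have h2 := (hrc.tendsto.comp h1)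
      rw [Real.zero_rpow (by positivity : (1:ℝ)/p ≠ 0)] at h2
      simpa using h2.const_mul (max M 0)
    refine squeeze_zero_norm' ?_ hG
    filter_upwards [hbound, habs] with ε hb ha
    rw [← ha]
    exact hb y y' hderiv hy'int
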